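/- For the static metric g = -f(r) dt² + f(r)⁻¹ dr² + r² dθ² with f(r) = -M - (Q²/2) ln r + r²/ℓ² on the region where f > 0, the Einstein tensor satisfies G_{ab} + Λ g_{ab} = q (F_{ac}F_b{}^c - (1/4) g_{ab} F_{de}F^{de}) with Λ = -1/ℓ², where F = (Q/√(2q)) r⁻¹ dt ∧ dr. -/

import Mathlib

open Matrix

noncomputable section

/-- Partial derivative of a function of coordinates `p : Fin 3 → ℝ`
in the `i`-th coordinate direction. -/
def pd (h : (Fin 3 → ℝ) → ℝ) (i : Fin 3) (p : Fin 3 → ℝ) : ℝ :=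
  fderiv ℝ h p (Pi.single i 1)

/-- Christoffel symbols `Γ^a_{bc}` of the Levi-Civita connection of a metric given
in coordinates by the matrix-valued function `G`. -/
def christoffel (G : (Fin 3 → ℝ) → Matrix (Fin 3) (Fin 3) ℝ)
    (p : Fin 3 → ℝ) (a b c : Fin 3) : ℝ :=
  (1/2) * ∑ d, (G p)⁻¹ a d *
    (pd (fun x => G x d c) b p + pd (fun x => G x d b) c p - pd (fun x => G x b c) d p)

/-- Ricci tensor of the metric `G` in coordinates. -/
def ricci (G : (Fin 3 → ℝ) → Matrix (Fin 3) (Fin 3) ℝ)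
    (p : Fin 3 → ℝ) (a b : Fin 3) : ℝ :=
  (∑ c, pd (fun x => christoffel G x c a b) c p)
    - (∑ c, pd (fun x => christoffel G x c c b) a p)
    + (∑ c, ∑ d, christoffel G p c c d * christoffel G p d a b)
    - (∑ c, ∑ d, christoffel G p c a d * christoffel G p d c b)

/-- Scalar curvature of the metric `G` in coordinates. -/
def scalarCurv (G : (Fin 3 → ℝ) → Matrix (Fin 3) (Fin 3) ℝ) (p : Fin 3 → ℝ) : ℝ :=
  ∑ a, ∑ b, (G p)⁻¹ a b * ricci G p a b

/-- Einstein tensor `G_{ab} = R_{ab} - (1/2) R g_{ab}` of the metric `G`. -/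
def einstein (G : (Fin 3 → ℝ) → Matrix (Fin 3) (Fin 3) ℝ)
    (p : Fin 3 → ℝ) (a b : Fin 3) : ℝ :=
  ricci G p a b - (1/2) * scalarCurv G p * G p a b

/-- The BTZ metric function `f(r) = -M - (Q²/2) ln r + r²/ℓ²`. -/
def btzF (M Q ℓ : ℝ) (r : ℝ) : ℝ := -M - Q ^ 2 / 2 * Real.log r + r ^ 2 / ℓ ^ 2

/-- The static metric `g = -f(r) dt² + f(r)⁻¹ dr² + r² dθ²` in coordinates
`(t,r,θ) = (p 0, p 1, p 2)`. -/
def btzMetric (M Q ℓ : ℝ) (p : Fin 3 → ℝ) : Matrix (Fin 3) (Fin 3) ℝ :=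
  !![-(btzF M Q ℓ (p 1)), 0, 0; 0, (btzF M Q ℓ (p 1))⁻¹, 0; 0, 0, (p 1) ^ 2]

/-- The electromagnetic field `F = (Q/√(2q)) r⁻¹ dt ∧ dr` in the same coordinates. -/
def btzEM (Q q : ℝ) (p : Fin 3 → ℝ) : Matrix (Fin 3) (Fin 3) ℝ :=
  !![0, Q / Real.sqrt (2 * q) * (p 1)⁻¹, 0;
     -(Q / Real.sqrt (2 * q) * (p 1)⁻¹), 0, 0; 0, 0, 0]

/-! ### Auxiliary machinery -/

/-- First derivative of `btzF`. -/
def btzFd (Q ℓ r : ℝ) : ℝ := -(Q ^ 2 / 2) * r⁻¹ + 2 * r / ℓ ^ 2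

/-- Second derivative of `btzF`. -/
def btzFdd (Q ℓ r : ℝ) : ℝ := Q ^ 2 / 2 * (r ^ 2)⁻¹ + 2 / ℓ ^ 2

lemma hasDerivAt_btzF (M Q ℓ : ℝ) {r : ℝ} (hr : 0 < r) :
    HasDerivAt (btzF M Q ℓ) (btzFd Q ℓ r) r := by
  have heq : btzF M Q ℓ = fun s => -M - Q ^ 2 / 2 * Real.log s + s ^ 2 / ℓ ^ 2 := rfl
  rw [heq]
  have h := ((hasDerivAt_const r (-M)).sub
      ((Real.hasDerivAt_log hr.ne').const_mul (Q ^ 2 / 2))).add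
      ((hasDerivAt_pow 2 r).div_const (ℓ ^ 2))
  refine h.congr_deriv ?_
  simp [btzFd]

lemma hasDerivAt_btzFd (Q ℓ : ℝ) {r : ℝ} (hr : 0 < r) :
    HasDerivAt (btzFd Q ℓ) (btzFdd Q ℓ r) r := by
  have heq : btzFd Q ℓ = fun s => -(Q ^ 2 / 2) * s⁻¹ + 2 * s / ℓ ^ 2 := rfl
  rw [heq]
  have h := (((hasDerivAt_inv hr.ne').const_mul (-(Q ^ 2 / 2))).add
      (((hasDerivAt_id r).const_mul 2).div_const (ℓ ^ 2)))
  refine h.congr_deriv ?_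
  simp [btzFdd]

lemma pd_of_comp {h : ℝ → ℝ} {h' : ℝ} {p : Fin 3 → ℝ} (hh : HasDerivAt h h' (p 1)) (i : Fin 3) :
    pd (fun x => h (x 1)) i p = if i = 1 then h' else 0 := by
  have hc : HasFDerivAt (fun x : Fin 3 → ℝ => h (x 1))
      ((ContinuousLinearMap.smulRight (1 : ℝ →L[ℝ] ℝ) h').comp (ContinuousLinearMap.proj 1)) p :=
    hh.hasFDerivAt.comp p (hasFDerivAt_apply (𝕜 := ℝ) 1 p)
  rw [pd, hc.fderiv]
  rcases eq_or_ne i 1 with h1 | h1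
  · subst h1; simp
  · simp [Pi.single_eq_of_ne (Ne.symm h1), h1]

lemma pd_const (c : ℝ) (i : Fin 3) (p : Fin 3 → ℝ) : pd (fun _ => c) i p = 0 := by
  simp [pd]

lemma pd_congr {h₁ h₂ : (Fin 3 → ℝ) → ℝ} {p : Fin 3 → ℝ} (i : Fin 3)
    (he : h₁ =ᶠ[nhds p] h₂) : pd h₁ i p = pd h₂ i p := by
  rw [pd, pd, he.fderiv_eq]

/-- The `r`-derivative of the BTZ metric components. -/
def dmet (M Q ℓ r : ℝ) : Matrix (Fin 3) (Fin 3) ℝ :=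
  !![-(btzFd Q ℓ r), 0, 0; 0, -(btzFd Q ℓ r) / btzF M Q ℓ r ^ 2, 0; 0, 0, 2 * r]

lemma pd_g (M Q ℓ : ℝ) {p : Fin 3 → ℝ} (hr : 0 < p 1) (hf : 0 < btzF M Q ℓ (p 1))
    (d c i : Fin 3) :
    pd (fun x => btzMetric M Q ℓ x d c) i p
      = if i = 1 then dmet M Q ℓ (p 1) d c else 0 := by
  have hsq : HasDerivAt (fun s : ℝ => s ^ 2) (2 * p 1) (p 1) := by
    simpa using hasDerivAt_pow 2 (p 1)
  fin_cases d <;> fin_cases c <;>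
    first
      | exact pd_of_comp ((hasDerivAt_btzF M Q ℓ hr).neg) i
      | exact pd_of_comp ((hasDerivAt_btzF M Q ℓ hr).inv hf.ne') i
      | exact pd_of_comp hsq i
      | exact pd_of_comp (hasDerivAt_const (p 1) (0 : ℝ)) i

lemma btzMetric_inv (M Q ℓ : ℝ) (p : Fin 3 → ℝ) (hr : 0 < p 1)
    (hf : 0 < btzF M Q ℓ (p 1)) :
    (btzMetric M Q ℓ p)⁻¹
      = !![-(btzF M Q ℓ (p 1))⁻¹, 0, 0; 0, btzF M Q ℓ (p 1), 0; 0, 0, ((p 1) ^ 2)⁻¹] := by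
  apply Matrix.inv_eq_right_inv
  ext i j
  fin_cases i <;> fin_cases j <;>
    simp [btzMetric, Matrix.mul_apply, Fin.sum_univ_three, Matrix.one_apply,
      Matrix.vecHead, Matrix.vecTail, Function.comp] <;>
    field_simp

/-- The Christoffel symbols of the BTZ metric, as an explicit function of `r`. -/
def gam (M Q ℓ r : ℝ) : Fin 3 → Matrix (Fin 3) (Fin 3) ℝ :=
  ![!![0, btzFd Q ℓ r / (2 * btzF M Q ℓ r), 0;
      btzFd Q ℓ r / (2 * btzF M Q ℓ r), 0, 0; 0, 0, 0],
    !![btzF M Q ℓ r * btzFd Q ℓ r / 2, 0, 0;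
      0, -(btzFd Q ℓ r / (2 * btzF M Q ℓ r)), 0; 0, 0, -(r * btzF M Q ℓ r)],
    !![0, 0, 0; 0, 0, r⁻¹; 0, r⁻¹, 0]]

/-- The `r`-derivative of `gam`. -/
def dgam (M Q ℓ r : ℝ) : Fin 3 → Matrix (Fin 3) (Fin 3) ℝ :=
  ![!![0, (btzFdd Q ℓ r * btzF M Q ℓ r - btzFd Q ℓ r ^ 2) / (2 * btzF M Q ℓ r ^ 2), 0;
      (btzFdd Q ℓ r * btzF M Q ℓ r - btzFd Q ℓ r ^ 2) / (2 * btzF M Q ℓ r ^ 2), 0, 0;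
      0, 0, 0],
    !![(btzFd Q ℓ r ^ 2 + btzF M Q ℓ r * btzFdd Q ℓ r) / 2, 0, 0;
      0, -((btzFdd Q ℓ r * btzF M Q ℓ r - btzFd Q ℓ r ^ 2) / (2 * btzF M Q ℓ r ^ 2)), 0;
      0, 0, -(btzF M Q ℓ r + r * btzFd Q ℓ r)],
    !![0, 0, 0; 0, 0, -(r ^ 2)⁻¹; 0, -(r ^ 2)⁻¹, 0]]

lemma christoffel_eq (M Q ℓ : ℝ) (x : Fin 3 → ℝ) (hr : 0 < x 1)
    (hf : 0 < btzF M Q ℓ (x 1)) (a b c : Fin 3) :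
    christoffel (btzMetric M Q ℓ) x a b c = gam M Q ℓ (x 1) a b c := by
  have hinv := btzMetric_inv M Q ℓ x hr hf
  have hfne := hf.ne'
  have hrne := hr.ne'
  fin_cases a <;> fin_cases b <;> fin_cases c <;>
    (simp only [christoffel, hinv, Fin.sum_univ_three, pd_g M Q ℓ hr hf,
       Fin.zero_eta, Fin.mk_one, Fin.reduceFinMk, Fin.isValue]
     norm_num [gam, dmet, Fin.ext_iff, Matrix.cons_val_two, Matrix.vecHead, Matrix.vecTail, Function.comp]) <;>
    field_simp <;> ring

lemma hasDerivAt_gam (M Q ℓ : ℝ) {r : ℝ} (hr : 0 < r) (hf : 0 < btzF M Q ℓ r)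
    (a b c : Fin 3) :
    HasDerivAt (fun s => gam M Q ℓ s a b c) (dgam M Q ℓ r a b c) r := by
  have hF := hasDerivAt_btzF M Q ℓ hr
  have hFd := hasDerivAt_btzFd Q ℓ hr
  have hfne := hf.ne'
  have h2f : 2 * btzF M Q ℓ r ≠ 0 := mul_ne_zero two_ne_zero hfne
  have hA : HasDerivAt (fun s => btzFd Q ℓ s / (2 * btzF M Q ℓ s))
      ((btzFdd Q ℓ r * btzF M Q ℓ r - btzFd Q ℓ r ^ 2) / (2 * btzF M Q ℓ r ^ 2)) r := by
    have h := hFd.div (hF.const_mul 2) h2f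
    refine h.congr_deriv ?_
    field_simp
  have hB : HasDerivAt (fun s => btzF M Q ℓ s * btzFd Q ℓ s / 2)
      ((btzFd Q ℓ r ^ 2 + btzF M Q ℓ r * btzFdd Q ℓ r) / 2) r := by
    have h := (hF.mul hFd).div_const 2
    refine h.congr_deriv ?_
    ring
  have hD : HasDerivAt (fun s => -(s * btzF M Q ℓ s))
      (-(btzF M Q ℓ r + r * btzFd Q ℓ r)) r := by
    have h := ((hasDerivAt_id r).mul hF).neg
    refine h.congr_deriv ?_
    simp only [id_eq]
    ring
  have hE : HasDerivAt (fun s : ℝ => s⁻¹) (-(r ^ 2)⁻¹) r := hasDerivAt_inv hr.ne'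
  have hZ : HasDerivAt (fun _ : ℝ => (0 : ℝ)) 0 r := hasDerivAt_const r 0
  fin_cases a <;> fin_cases b <;> fin_cases c <;>
    simp only [gam, dgam, Matrix.cons_val', Matrix.cons_val_zero, Matrix.cons_val_one,
      Matrix.head_cons, Matrix.head_fin_const, Matrix.empty_val', Matrix.cons_val_fin_one,
      Matrix.of_apply, Matrix.cons_val_two, Matrix.tail_cons, Fin.zero_eta, Fin.mk_one,
      Fin.reduceFinMk, Fin.isValue] <;>
    first
      | exact hZ
      | exact hA
      | exact hA.neg
      | exact hB
      | exact hD
      | exact hE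

lemma pd_chris (M Q ℓ : ℝ) {p : Fin 3 → ℝ} (hr : 0 < p 1)
    (hf : 0 < btzF M Q ℓ (p 1)) (i a b c : Fin 3) :
    pd (fun x => christoffel (btzMetric M Q ℓ) x a b c) i p
      = if i = 1 then dgam M Q ℓ (p 1) a b c else 0 := by
  have h1 : ContinuousAt (fun y : Fin 3 → ℝ => y 1) p := (continuous_apply 1).continuousAt
  have h2 : ContinuousAt (fun y : Fin 3 → ℝ => btzF M Q ℓ (y 1)) p :=
    ContinuousAt.comp (g := btzF M Q ℓ) (f := fun y : Fin 3 → ℝ => y 1)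
      ((hasDerivAt_btzF M Q ℓ hr).continuousAt) h1
  have hU : {x : Fin 3 → ℝ | 0 < x 1 ∧ 0 < btzF M Q ℓ (x 1)} ∈ nhds p :=
    Filter.mem_of_superset
      (Filter.inter_mem (h1 (Ioi_mem_nhds hr)) (h2 (Ioi_mem_nhds hf)))
      (fun y hy => ⟨hy.1, hy.2⟩)
  have he : (fun x => christoffel (btzMetric M Q ℓ) x a b c)
      =ᶠ[nhds p] fun x => gam M Q ℓ (x 1) a b c :=
    Filter.eventuallyEq_of_mem hU fun x hx => christoffel_eq M Q ℓ x hx.1 hx.2 a b c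
  rw [pd_congr i he, pd_of_comp (hasDerivAt_gam M Q ℓ hr hf a b c) i]

/-- The Ricci tensor of the BTZ metric, as an explicit function of `r`. -/
def ricM (M Q ℓ r : ℝ) : Matrix (Fin 3) (Fin 3) ℝ :=
  !![btzF M Q ℓ r * (btzFdd Q ℓ r / 2 + btzFd Q ℓ r / (2 * r)), 0, 0;
     0, -((btzFdd Q ℓ r / 2 + btzFd Q ℓ r / (2 * r)) / btzF M Q ℓ r), 0;
     0, 0, -(r * btzFd Q ℓ r)]

lemma ricci_eq (M Q ℓ : ℝ) (p : Fin 3 → ℝ) (hr : 0 < p 1)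
    (hf : 0 < btzF M Q ℓ (p 1)) (a b : Fin 3) :
    ricci (btzMetric M Q ℓ) p a b = ricM M Q ℓ (p 1) a b := by
  have hfne := hf.ne'
  have hrne := hr.ne'
  fin_cases a <;> fin_cases b <;>
    (simp only [ricci, Fin.sum_univ_three, Fin.zero_eta, Fin.mk_one, Fin.reduceFinMk,
       Fin.isValue]
     simp only [pd_chris M Q ℓ hr hf, christoffel_eq M Q ℓ p hr hf]
     norm_num [gam, dgam, ricM, Fin.ext_iff, Matrix.cons_val_two, Matrix.vecHead, Matrix.vecTail, Function.comp]) <;>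
    field_simp <;> ring

lemma scalarCurv_eq (M Q ℓ : ℝ) (p : Fin 3 → ℝ) (hr : 0 < p 1)
    (hf : 0 < btzF M Q ℓ (p 1)) :
    scalarCurv (btzMetric M Q ℓ) p = -(btzFdd Q ℓ (p 1) + 2 * btzFd Q ℓ (p 1) / p 1) := by
  have hfne := hf.ne'
  have hrne := hr.ne'
  have hinv := btzMetric_inv M Q ℓ p hr hf
  simp only [scalarCurv, Fin.sum_univ_three, hinv, ricci_eq M Q ℓ p hr hf]
  norm_num [ricM, Matrix.cons_val_two, Matrix.vecHead, Matrix.vecTail, Function.comp]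
  field_simp
  ring

set_option maxHeartbeats 2000000 in
theorem stmt18 (M Q ℓ q : ℝ) (hM : 0 < M) (hQ : 0 < Q) (hℓ : 0 < ℓ) (hq : 0 < q) :
    ∀ p : Fin 3 → ℝ, 0 < p 1 → 0 < btzF M Q ℓ (p 1) → ∀ a b : Fin 3,
      einstein (btzMetric M Q ℓ) p a b + (-(1 / ℓ ^ 2)) * btzMetric M Q ℓ p a b
        = q * ((∑ c, ∑ d, btzEM Q q p a c * (btzMetric M Q ℓ p)⁻¹ c d * btzEM Q q p b d)
          - (1/4) * btzMetric M Q ℓ p a b *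
            (∑ c, ∑ d, ∑ e, ∑ f, btzEM Q q p c d * (btzMetric M Q ℓ p)⁻¹ c e
              * (btzMetric M Q ℓ p)⁻¹ d f * btzEM Q q p e f)) := by
  intro p hr hf a b
  have hfne := hf.ne'
  have hrne := hr.ne'
  have hinv := btzMetric_inv M Q ℓ p hr hf
  obtain ⟨s, hspos, hsdef⟩ : ∃ s : ℝ, 0 < s ∧ Real.sqrt (2 * q) = s :=
    ⟨_, Real.sqrt_pos.2 (by linarith), rfl⟩
  have hqs : q = s ^ 2 / 2 := by
    rw [← hsdef, Real.sq_sqrt (by linarith : (0:ℝ) ≤ 2 * q)]; ring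
  fin_cases a <;> fin_cases b <;>
    (simp only [einstein, ricci_eq M Q ℓ p hr hf, scalarCurv_eq M Q ℓ p hr hf, hinv,
       Fin.sum_univ_three, Fin.zero_eta, Fin.mk_one, Fin.reduceFinMk, Fin.isValue]
     norm_num [ricM, btzMetric, btzEM, btzFd, btzFdd, hsdef, Matrix.cons_val_two, Matrix.vecHead,
         Matrix.vecTail, Function.comp]
     try rw [hqs]) <;>
    field_simp [hfne, hrne, hℓ.ne', hspos.ne'] <;>
    ring

end
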